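/- Finite-rank shift-invariant kernels are trigonometric: Suppose κ : ℤ → ℝ is bounded and there exist functions φ, ψ : ℤ → ℝ^{d_p} with κ(i - j) = ⟨φ(i), ψ(j)⟩ for all i, j ∈ ℤ. Then there exist M ≤ d_p, angles θ_1,…,θ_M ∈ [0, 2π), and complex coefficients c_1,…,c_M such that κ(d) = ∑_{m=1}^M c_m e^{i θ_m d} for all d ∈ ℤ. -/

import Mathlib

open Real Finset

namespace TrigAux

noncomputable section

/-- The shift equivalence on two-sided sequences. -/
def shiftE : (ℤ → ℂ) ≃ₗ[ℂ] (ℤ → ℂ) where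
  toFun f d := f (d + 1)
  invFun f d := f (d - 1)
  map_add' _ _ := rfl
  map_smul' _ _ := rfl
  left_inv f := funext fun d => by simp
  right_inv f := funext fun d => by simp

@[simp] lemma shiftE_apply (f : ℤ → ℂ) (d : ℤ) : shiftE f d = f (d + 1) := rfl

lemma shiftE_zpow_apply (n : ℤ) (f : ℤ → ℂ) (d : ℤ) : ((shiftE ^ n) f) d = f (d + n) := by
  induction n using Int.induction_on generalizing f with
  | zero => simp
  | succ k ih =>
      have h1 : (shiftE ^ ((k : ℤ) + 1)) = shiftE ^ (k : ℤ) * shiftE := zpow_add_one _ _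
      rw [h1]
      show ((shiftE ^ (k : ℤ)) (shiftE f)) d = _
      rw [ih (shiftE f)]
      show f (d + (k:ℤ) + 1) = _
      ring_nf
  | pred k ih =>
      have h1 : (shiftE ^ (-(k : ℤ) - 1)) = shiftE ^ (-(k : ℤ)) * shiftE⁻¹ := zpow_sub_one _ _
      rw [h1]
      show ((shiftE ^ (-(k : ℤ))) (shiftE⁻¹ f)) d = _
      rw [ih (shiftE⁻¹ f)]
      show f (d + -(k:ℤ) - 1) = _
      ring_nf

/-- A sequence annihilated by the shift is zero. -/
lemma eq_zero_of_shift_eq_zero (f : ℤ → ℂ) (h : ∀ d, f (d + 1) = 0) : f = 0 :=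
  funext fun e => by simpa using h (e - 1)

/-- Eigen-sequence formula. -/
lemma eig_form {μ : ℂ} (hμ : μ ≠ 0) (f : ℤ → ℂ) (h : ∀ d, f (d + 1) = μ * f d) (d : ℤ) :
    f d = μ ^ d * f 0 := by
  induction d using Int.induction_on with
  | zero => simp
  | succ k ih =>
      rw [h k, ih, zpow_add_one₀ hμ]
      ring
  | pred k ih =>
      have h1 : f (-(k : ℤ)) = μ * f (-(k : ℤ) - 1) := by
        have := h (-(k : ℤ) - 1); rwa [sub_add_cancel] at this
      apply mul_left_cancel₀ hμ
      rw [← h1, ih, zpow_sub_one₀ hμ]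
      field_simp

/-- A nonzero bounded geometric sequence forces a unimodular ratio. -/
lemma abs_eq_one {μ : ℂ} (hμ : μ ≠ 0) {a C : ℝ} (ha : 0 < a)
    (h : ∀ d : ℤ, ‖μ ^ d‖ * a ≤ C) : ‖μ‖ = 1 := by
  set r := ‖μ‖ with hr
  have hr0 : 0 < r := by simpa [hr] using (norm_pos_iff.mpr hμ)
  rcases lt_trichotomy r 1 with hlt | heq | hgt
  · exfalso
    have hinv : 1 < r⁻¹ := (one_lt_inv₀ hr0).2 hlt
    obtain ⟨n, hn⟩ := pow_unbounded_of_one_lt (C / a) hinv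
    have hb := h (-(n : ℤ))
    rw [norm_zpow, ← hr, zpow_neg, zpow_natCast, ← inv_pow] at hb
    have hc : r⁻¹ ^ n ≤ C / a := (le_div_iff₀ ha).2 hb
    exact absurd hn (not_lt.2 hc)
  · exact heq
  · exfalso
    obtain ⟨n, hn⟩ := pow_unbounded_of_one_lt (C / a) hgt
    have hb := h (n : ℤ)
    rw [norm_zpow, ← hr, zpow_natCast] at hb
    have hc : r ^ n ≤ C / a := (le_div_iff₀ ha).2 hb
    exact absurd hn (not_lt.2 hc)

/-- No Jordan blocks: a bounded solution of `g(d+1) = μ g(d) + μ^d h₀` with `|μ| = 1`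
forces `h₀ = 0`. -/
lemma jordan {μ : ℂ} (habs : ‖μ‖ = 1) (g : ℤ → ℂ) (h0 : ℂ) (Cg : ℝ)
    (hg : ∀ d, ‖g d‖ ≤ Cg)
    (hrec : ∀ d : ℤ, g (d + 1) = μ * g d + μ ^ d * h0) : h0 = 0 := by
  have hμ : μ ≠ 0 := by
    intro h; rw [h] at habs; simp at habs
  have hform : ∀ n : ℕ, g n = μ ^ (n : ℤ) * g 0 + (n : ℂ) * μ ^ ((n : ℤ) - 1) * h0 := by
    intro n
    induction n with
    | zero => simp
    | succ n ih =>
        push_cast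
        rw [hrec n, ih]
        have e1 : ((n:ℤ) + 1 - 1) = (n:ℤ) := by ring
        rw [e1, zpow_add_one₀ hμ, zpow_sub_one₀ hμ]
        field_simp
        ring
  by_contra hne
  have hpos : 0 < ‖h0‖ := norm_pos_iff.mpr hne
  obtain ⟨n, hn⟩ := exists_nat_gt ((Cg + ‖g 0‖) / ‖h0‖)
  have habs1 : ∀ m : ℤ, ‖μ ^ m‖ = 1 := fun m => by
    rw [norm_zpow, habs, one_zpow]
  have key : (n : ℝ) * ‖h0‖ ≤ Cg + ‖g 0‖ := by
    have h1 : ‖g (n : ℤ) - μ ^ (n : ℤ) * g 0‖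
        ≤ ‖g (n : ℤ)‖ + ‖μ ^ (n : ℤ) * g 0‖ := by
      simpa [sub_eq_add_neg] using norm_add_le (g (n : ℤ)) (-(μ ^ (n : ℤ) * g 0))
    have h2 : g (n : ℤ) - μ ^ (n : ℤ) * g 0 = (n : ℂ) * μ ^ ((n : ℤ) - 1) * h0 := by
      rw [hform n]; ring
    rw [h2] at h1
    have h3 : ‖(n : ℂ) * μ ^ ((n : ℤ) - 1) * h0‖ = (n : ℝ) * ‖h0‖ := by
      rw [norm_mul, norm_mul, habs1, Complex.norm_natCast]; ring
    have h4 : ‖μ ^ (n : ℤ) * g 0‖ = ‖g 0‖ := by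
      rw [norm_mul, habs1, one_mul]
    rw [h3, h4] at h1
    exact h1.trans (add_le_add (hg _) le_rfl)
  rw [div_lt_iff₀ hpos] at hn
  linarith

end

end TrigAux

open Real Finset

/-- Finite-rank shift-invariant kernels are trigonometric:
a bounded `κ : ℤ → ℝ` with `κ(i-j) = ⟨φ(i), ψ(j)⟩` for `φ, ψ : ℤ → ℝ^{d_p}`
is a finite sum of at most `d_p` complex exponentials with unit-modulus
frequencies. -/
theorem finite_rank_shift_invariant_kernel_trigonometric
    (dp : ℕ) (κ : ℤ → ℝ)
    (hbdd : ∃ C : ℝ, ∀ d : ℤ, |κ d| ≤ C)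
    (φ ψ : ℤ → Fin dp → ℝ)
    (hfact : ∀ i j : ℤ, κ (i - j) = ∑ l, φ i l * ψ j l) :
    ∃ (M : ℕ), M ≤ dp ∧ ∃ (θ : Fin M → ℝ) (c : Fin M → ℂ),
      (∀ m, θ m ∈ Set.Ico (0 : ℝ) (2 * π)) ∧
      ∀ d : ℤ, (κ d : ℂ) = ∑ m, c m * Complex.exp (Complex.I * (θ m) * (d : ℂ)) := by
  classical
  obtain ⟨C, hC⟩ := hbdd
  set κℂ : ℤ → ℂ := fun d => (κ d : ℂ) with hκℂ
  set g : ℤ → (ℤ → ℂ) := fun n => (TrigAux.shiftE ^ n) κℂ with hg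
  set Φ : Fin dp → (ℤ → ℂ) := fun l => fun d => (φ d l : ℂ) with hΦ
  set W : Submodule ℂ (ℤ → ℂ) := Submodule.span ℂ (Set.range Φ) with hW
  set V : Submodule ℂ (ℤ → ℂ) := Submodule.span ℂ (Set.range g) with hV
  haveI : FiniteDimensional ℂ W := FiniteDimensional.span_of_finite ℂ (Set.finite_range Φ)
  have hVW : V ≤ W := by
    rw [hV, Submodule.span_le]
    rintro _ ⟨n, rfl⟩
    have heq : g n = ∑ l, (ψ (-n) l : ℂ) • Φ l := by
      funext d
      have h1 := hfact d (-n)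
      have h2 : d - (-n) = d + n := by ring
      rw [h2] at h1
      simp only [hg, TrigAux.shiftE_zpow_apply, hκℂ, hΦ, Finset.sum_apply, Pi.smul_apply,
        smul_eq_mul]
      rw [h1]
      push_cast
      exact Finset.sum_congr rfl fun l _ => by ring
    rw [heq]
    exact Submodule.sum_mem _ fun l _ =>
      Submodule.smul_mem _ _ (Submodule.subset_span ⟨l, rfl⟩)
  haveI : FiniteDimensional ℂ V := Submodule.finiteDimensional_of_le hVW
  have hfrW : Module.finrank ℂ W ≤ dp := by
    refine (finrank_span_le_card _).trans ?_
    rw [Set.toFinset_card]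
    exact (Fintype.card_range_le Φ).trans (by simp)
  have hfrV : Module.finrank ℂ V ≤ dp := (Submodule.finrank_mono hVW).trans hfrW
  -- the shift preserves V
  have hstab : ∀ x ∈ V, (TrigAux.shiftE : (ℤ → ℂ) →ₗ[ℂ] (ℤ → ℂ)) x ∈ V := by
    intro x hx
    have hmap : Submodule.map (TrigAux.shiftE : (ℤ → ℂ) →ₗ[ℂ] (ℤ → ℂ)) V ≤ V := by
      rw [hV, Submodule.map_span, Submodule.span_le]
      rintro _ ⟨_, ⟨n, rfl⟩, rfl⟩
      refine Submodule.subset_span ⟨n + 1, ?_⟩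
      show (TrigAux.shiftE ^ (n + 1)) κℂ = TrigAux.shiftE ((TrigAux.shiftE ^ n) κℂ)
      rw [add_comm, zpow_add, zpow_one]
      rfl
    exact hmap (Submodule.mem_map_of_mem hx)
  set S : Module.End ℂ V := (TrigAux.shiftE : (ℤ → ℂ) →ₗ[ℂ] (ℤ → ℂ)).restrict hstab with hS
  have hS_apply : ∀ (x : V) (d : ℤ), ((S x : ℤ → ℂ)) d = (x : ℤ → ℂ) (d + 1) := by
    intro x d; rfl
  -- every element of V is bounded
  have hVbdd : ∀ x ∈ V, ∃ Cx : ℝ, ∀ d, ‖x d‖ ≤ Cx := by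
    intro x hx
    set B : Submodule ℂ (ℤ → ℂ) :=
      { carrier := {f | ∃ Cf : ℝ, ∀ d, ‖f d‖ ≤ Cf}
        add_mem' := by
          rintro a b ⟨Ca, ha⟩ ⟨Cb, hb⟩
          exact ⟨Ca + Cb, fun d =>
            (norm_add_le _ _).trans (add_le_add (ha d) (hb d))⟩
        zero_mem' := ⟨0, fun d => by simp⟩
        smul_mem' := by
          rintro c f ⟨Cf, hf⟩
          exact ⟨‖c‖ * Cf, fun d => by
            simpa [norm_mul] using
              mul_le_mul_of_nonneg_left (hf d) (norm_nonneg c)⟩ } with hB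
    have hVB : V ≤ B := by
      rw [hV, Submodule.span_le]
      rintro _ ⟨n, rfl⟩
      refine ⟨C, fun d => ?_⟩
      show ‖(g n) d‖ ≤ C
      rw [hg]
      simp only [TrigAux.shiftE_zpow_apply, hκℂ, Complex.norm_real, Real.norm_eq_abs]
      exact hC _
    exact hVB hx
  -- generalized eigenvectors of S are eigenvectors
  have key : ∀ (μ : ℂ) (k : ℕ) (x : V), ((S - μ • 1) ^ k) x = 0 → S x = μ • x := by
    intro μ k
    induction k with
    | zero =>
        intro x hx
        have hx0 : x = 0 := by simpa using hx
        simp [hx0]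
    | succ k ih =>
        intro x hx
        set y : V := (S - μ • 1) x with hy
        have hyk : ((S - μ • 1) ^ k) y = 0 := by
          rw [hy, ← Module.End.mul_apply, ← pow_succ]
          exact hx
        have hyeig : S y = μ • y := ih y hyk
        have hy0 : y = 0 := by
          by_contra hy0
          have hyseq : ∀ d, (y : ℤ → ℂ) (d + 1) = μ * (y : ℤ → ℂ) d := by
            intro d
            have h1 := congrArg (fun z : V => (z : ℤ → ℂ) d) hyeig
            simpa [hS_apply] using h1
          have hμ0 : μ ≠ 0 := by
            intro hμ0
            apply hy0
            have : (y : ℤ → ℂ) = 0 :=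
              TrigAux.eq_zero_of_shift_eq_zero _ (by simpa [hμ0] using hyseq)
            exact Subtype.ext this
          have hform : ∀ d, (y : ℤ → ℂ) d = μ ^ d * (y : ℤ → ℂ) 0 :=
            TrigAux.eig_form hμ0 _ hyseq
          have hy00 : (y : ℤ → ℂ) 0 ≠ 0 := by
            intro h0
            apply hy0
            refine Subtype.ext (funext fun d => ?_)
            rw [hform d, h0, mul_zero]; rfl
          obtain ⟨Cy, hCy⟩ := hVbdd (y : ℤ → ℂ) y.2
          have habs : ‖μ‖ = 1 := by
            refine TrigAux.abs_eq_one (C := Cy) hμ0 (norm_pos_iff.mpr hy00) fun d => ?_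
            rw [← norm_mul, ← hform d]
            exact hCy d
          obtain ⟨Cx, hCx⟩ := hVbdd (x : ℤ → ℂ) x.2
          have hgrec : ∀ d : ℤ, (x : ℤ → ℂ) (d + 1)
              = μ * (x : ℤ → ℂ) d + μ ^ d * (y : ℤ → ℂ) 0 := by
            intro d
            have h1 : (y : ℤ → ℂ) d = (x : ℤ → ℂ) (d + 1) - μ * (x : ℤ → ℂ) d := by
              rw [hy]
              show ((S x - μ • x : V) : ℤ → ℂ) d = _
              simp [hS_apply]
            have h2 := hform d
            rw [h1] at h2
            linear_combination h2
          exact hy00 (TrigAux.jordan habs _ _ Cx hCx hgrec)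
        rw [hy] at hy0
        have h3 : S x - μ • x = 0 := by
          simpa [LinearMap.sub_apply] using hy0
        exact sub_eq_zero.1 h3
  -- κℂ lies in V
  have hκV : κℂ ∈ V := by
    refine Submodule.subset_span ⟨0, ?_⟩
    show (TrigAux.shiftE ^ (0 : ℤ)) κℂ = κℂ
    rw [zpow_zero]; rfl
  set κ' : V := ⟨κℂ, hκV⟩ with hκ'
  have htop := Module.End.iSup_maxGenEigenspace_eq_top S
  have hmem : κ' ∈ ⨆ μ : ℂ, S.maxGenEigenspace μ := by rw [htop]; exact Submodule.mem_top
  rw [Submodule.mem_iSup_iff_exists_finsupp] at hmem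
  obtain ⟨F, hF, hFsum⟩ := hmem
  have heig : ∀ μ : ℂ, S (F μ) = μ • (F μ) := by
    intro μ
    obtain ⟨k, hk⟩ := (Module.End.mem_maxGenEigenspace S μ (F μ)).1 (hF μ)
    exact key μ k (F μ) hk
  have hseq : ∀ μ ∈ F.support, μ ≠ 0 ∧ ‖μ‖ = 1 ∧
      ∀ d : ℤ, ((F μ : ℤ → ℂ)) d = μ ^ d * ((F μ : ℤ → ℂ)) 0 := by
    intro μ hμsup
    have hne : F μ ≠ 0 := Finsupp.mem_support_iff.1 hμsup
    have hyseq : ∀ d, ((F μ : ℤ → ℂ)) (d + 1) = μ * ((F μ : ℤ → ℂ)) d := by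
      intro d
      have h1 := congrArg (fun z : V => (z : ℤ → ℂ) d) (heig μ)
      simpa [hS_apply] using h1
    have hμ0 : μ ≠ 0 := by
      intro h0
      exact hne (Subtype.ext
        (TrigAux.eq_zero_of_shift_eq_zero _ (by simpa [h0] using hyseq)))
    have hform := TrigAux.eig_form hμ0 _ hyseq
    have h00 : ((F μ : ℤ → ℂ)) 0 ≠ 0 := by
      intro h0
      apply hne
      refine Subtype.ext (funext fun d => ?_)
      rw [hform d, h0, mul_zero]; rfl
    obtain ⟨Cf, hCf⟩ := hVbdd _ (F μ).2
    refine ⟨hμ0, ?_, hform⟩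
    refine TrigAux.abs_eq_one (C := Cf) hμ0 (norm_pos_iff.mpr h00) fun d => ?_
    rw [← norm_mul, ← hform d]
    exact hCf d
  set M := F.support.card with hM
  have hMdp : M ≤ dp := by
    have hli : LinearIndependent ℂ (fun μ : F.support => F μ) := by
      apply Module.End.eigenvectors_linearIndependent' S (fun μ : F.support => (μ : ℂ))
        Subtype.coe_injective
      intro μ
      exact ⟨Module.End.mem_eigenspace_iff.2 (heig μ), Finsupp.mem_support_iff.1 μ.2⟩
    have h1 := hli.fintype_card_le_finrank
    rw [Fintype.card_coe] at h1
    exact h1.trans hfrV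
  set e : Fin M ≃ {x // x ∈ F.support} := F.support.equivFin.symm with he
  set θ : Fin M → ℝ := fun m =>
    if 0 ≤ Complex.arg ((e m : ℂ)) then Complex.arg ((e m : ℂ))
    else Complex.arg ((e m : ℂ)) + 2 * π with hθ
  set c : Fin M → ℂ := fun m => ((F ((e m : ℂ)) : ℤ → ℂ)) 0 with hc
  refine ⟨M, hMdp, θ, c, ?_, ?_⟩
  · intro m
    simp only [hθ]
    split_ifs with h
    · exact ⟨h, lt_of_le_of_lt (Complex.arg_le_pi _) (by linarith [pi_pos])⟩
    · push_neg at h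
      have h1 := Complex.neg_pi_lt_arg ((e m : ℂ))
      exact ⟨by linarith [pi_pos], by linarith [pi_pos]⟩
  · intro d
    have h0 : κℂ d = ∑ μ ∈ F.support, ((F μ : ℤ → ℂ)) d := by
      have h1 := congrArg (fun z : V => (z : ℤ → ℂ) d) hFsum
      simp only [Finsupp.sum] at h1
      rw [show κℂ d = (κ' : ℤ → ℂ) d from rfl, ← h1]
      rw [AddSubmonoidClass.coe_finset_sum, Finset.sum_apply]
    have hexpθ : ∀ m : Fin M, Complex.exp (Complex.I * (θ m : ℝ)) = ((e m : ℂ)) := by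
      intro m
      obtain ⟨hμ0, habs, hform⟩ := hseq ((e m : ℂ)) (e m).2
      have h1 := Complex.norm_mul_exp_arg_mul_I ((e m : ℂ))
      rw [habs, Complex.ofReal_one, one_mul] at h1
      simp only [hθ]
      split_ifs with hcase
      · rw [mul_comm]; exact h1
      · rw [show Complex.I * ((Complex.arg ((e m : ℂ)) + 2 * π : ℝ) : ℂ)
            = (Complex.arg ((e m : ℂ)) : ℂ) * Complex.I + 2 * (π : ℂ) * Complex.I by
              push_cast; ring]
        rw [Complex.exp_add, Complex.exp_two_pi_mul_I, mul_one]
        exact h1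
    calc (κ d : ℂ) = ∑ μ ∈ F.support, ((F μ : ℤ → ℂ)) d := h0
      _ = ∑ μ : F.support, ((F (μ : ℂ) : ℤ → ℂ)) d := (Finset.sum_coe_sort _ _).symm
      _ = ∑ m : Fin M, ((F ((e m : ℂ)) : ℤ → ℂ)) d := (Equiv.sum_comp e _).symm
      _ = ∑ m, c m * Complex.exp (Complex.I * (θ m) * (d : ℂ)) := by
          refine Finset.sum_congr rfl fun m _ => ?_
          obtain ⟨hμ0, habs, hform⟩ := hseq ((e m : ℂ)) (e m).2
          rw [hform d]
          have h2 : ((e m : ℂ)) ^ d = Complex.exp (Complex.I * (θ m) * (d : ℂ)) := by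
            rw [← hexpθ m, ← Complex.exp_int_mul]
            congr 1
            ring
          rw [h2, hc]
          ring
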